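/- Let G be an MPDAG, p = <A1, V1, ..., Y1> a shortest proper possibly causal path from A to Y starting with undirected edge A1 - V1, with p shielded so that A1 -> V2 is in G. Let G2 = MPDAG(G, {A1 <- V1}). Then in G2 the edge V1 -> V2 is directed (by acyclicity and Meek's rule R2), and consequently p(V1, Y1) is a fully directed causal path in G2; i.e., the path corresponding to p in G2 has the form A1 <- V1 -> V2 -> ... -> Y1. -/

import Mathlib

/-- A partially directed graph: directed edges `dir` and undirected edges `undir`. -/
structure PDAG (V : Type) where
  dir : V → V → Prop
  undir : V → V → Prop
  undir_symm : ∀ a b, undir a b → undir b a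

namespace PDAG

variable {V : Type}

/-- Two nodes are adjacent if joined by a directed or undirected edge. -/
def adj (G : PDAG V) (a b : V) : Prop := G.dir a b ∨ G.dir b a ∨ G.undir a b

/-- Each pair of nodes is joined by at most one edge, and no self loops. -/
def Wellformed (G : PDAG V) : Prop :=
  (∀ a b, ¬ (G.dir a b ∧ G.dir b a)) ∧ (∀ a b, ¬ (G.dir a b ∧ G.undir a b)) ∧
  (∀ a, ¬ G.undir a a)

/-- No directed cycles. -/
def Acyclic (G : PDAG V) : Prop := ∀ a, ¬ Relation.TransGen G.dir a a

/-- Closure under Meek's orientation rules R1–R4. -/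
def MeekClosed (G : PDAG V) : Prop :=
  (∀ a b c, G.dir a b → G.undir b c → ¬ G.adj a c → G.dir b c) ∧
  (∀ a b c, G.dir a c → G.dir c b → G.undir a b → G.dir a b) ∧
  (∀ a b c d, G.undir a b → G.undir a c → G.undir a d → G.dir c b → G.dir d b →
    ¬ G.adj c d → G.dir a b) ∧
  (∀ a b c d, G.undir d a → G.undir d b → G.undir d c → G.dir a b → G.dir b c →
    ¬ G.adj a c → G.dir d c)

/-- A maximally oriented PDAG. -/
def IsMPDAG (G : PDAG V) : Prop := G.Wellformed ∧ G.Acyclic ∧ G.MeekClosed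

/-- A DAG: acyclic, no undirected edges. -/
def IsDAG (G : PDAG V) : Prop := G.Wellformed ∧ G.Acyclic ∧ ∀ a b, ¬ G.undir a b

/-- A path: at least two distinct nodes, consecutive ones adjacent. -/
def IsPath (G : PDAG V) (p : List V) : Prop :=
  2 ≤ p.length ∧ p.Nodup ∧ List.Chain' G.adj p

/-- Possibly causal path: no edge `Vi ← Vj` in `G` for `i < j` among the path's nodes. -/
def PossiblyCausal (G : PDAG V) (p : List V) : Prop :=
  p.Pairwise (fun a b => ¬ G.dir b a)

/-- Causal path: every consecutive edge directed forwards. -/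
def Causal (G : PDAG V) (p : List V) : Prop := List.Chain' G.dir p

/-- Unshielded path: endpoints of every consecutive triple are nonadjacent. -/
def Unshielded (G : PDAG V) (p : List V) : Prop :=
  ∀ a b c, [a, b, c] <:+: p → ¬ G.adj a c

/-- Proper path w.r.t. `A`: only the first node is in `A`. -/
def ProperFrom (A : Set V) (p : List V) : Prop :=
  ∃ a t, p = a :: t ∧ a ∈ A ∧ ∀ x ∈ t, x ∉ A

/-- The path ends in the set `Y`. -/
def EndsIn (p : List V) (Y : Set V) : Prop := ∃ y, p.getLast? = some y ∧ y ∈ Y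

/-- The path starts with an undirected edge. -/
def StartsUndir (G : PDAG V) (p : List V) : Prop :=
  ∃ a b t, p = a :: b :: t ∧ G.undir a b

/-- The path starts with a directed edge. -/
def StartsDir (G : PDAG V) (p : List V) : Prop :=
  ∃ a b t, p = a :: b :: t ∧ G.dir a b

/-- A proper possibly causal path from `A` to `Y`. -/
def PPCPath (G : PDAG V) (A Y : Set V) (p : List V) : Prop :=
  G.IsPath p ∧ G.PossiblyCausal p ∧ ProperFrom A p ∧ EndsIn p Y

/-- Perković's identifiability condition: every proper possibly causal path from `A`
to `Y` starts with a directed edge. -/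
def IdCond (G : PDAG V) (A Y : Set V) : Prop :=
  ∀ p, G.PPCPath A Y p → G.StartsDir p

/-- A violating path: proper possibly causal from `A` to `Y` starting with an
undirected edge. -/
def ViolPath (G : PDAG V) (A Y : Set V) (p : List V) : Prop :=
  G.PPCPath A Y p ∧ G.StartsUndir p

/-- A shortest violating path. -/
def ShortestViol (G : PDAG V) (A Y : Set V) (p : List V) : Prop :=
  G.ViolPath A Y p ∧ ∀ q, G.ViolPath A Y q → p.length ≤ q.length

/-- Same adjacencies. -/
def SameAdj (G' G : PDAG V) : Prop := ∀ a b, G'.adj a b ↔ G.adj a b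

/-- Same unshielded colliders. -/
def SameUC (G' G : PDAG V) : Prop :=
  ∀ a b c, (G'.dir a b ∧ G'.dir c b ∧ ¬ G'.adj a c) ↔
    (G.dir a b ∧ G.dir c b ∧ ¬ G.adj a c)

/-- `G'` is represented by `G`: same adjacencies, same unshielded colliders, and
every directed edge of `G` appears in `G'`. -/
def RepresentedBy (G' G : PDAG V) : Prop :=
  SameAdj G' G ∧ SameUC G' G ∧ ∀ a b, G.dir a b → G'.dir a b

/-- `G1 = MPDAG(G, {A1 → V1})`: the least maximally oriented graph represented by `G`
containing the orientation `A1 → V1`. -/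
def IsOrientClosure (G : PDAG V) (A1 V1 : V) (G1 : PDAG V) : Prop :=
  G1.IsMPDAG ∧ RepresentedBy G1 G ∧ G1.dir A1 V1 ∧
  (∀ a b, G1.undir a b ↔ (G.adj a b ∧ ¬ G1.dir a b ∧ ¬ G1.dir b a)) ∧
  (∀ H : PDAG V, H.IsMPDAG → RepresentedBy H G → H.dir A1 V1 →
    ∀ a b, G1.dir a b → H.dir a b)

end PDAG


open List in
private lemma chain'_drop_mid {α : Type} {R : α → α → Prop} :
    ∀ (l : List α) (a b c : α) (s : List α), List.Chain' R (l ++ a :: b :: c :: s) →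
      R a c → List.Chain' R (l ++ a :: c :: s) := by
  intro l
  induction l with
  | nil =>
    intro a b c s h hac
    simp only [List.Chain', List.nil_append, List.isChain_cons_cons] at h ⊢
    exact ⟨hac, h.2.2⟩
  | cons x l ih =>
    intro a b c s h hac
    simp only [List.Chain', List.cons_append, List.isChain_cons] at h ⊢
    refine ⟨?_, ih a b c s h.2 hac⟩
    intro y hy
    apply h.1
    cases l with
    | nil => simpa using hy
    | cons z l => simpa using hy

private lemma getLast?_append_cons' {α : Type} (l : List α) (c : α) (s : List α) :
    (l ++ c :: s).getLast? = (c :: s).getLast? := by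
  rw [List.getLast?_append]
  obtain ⟨y, hy⟩ : ∃ y, (c :: s).getLast? = some y :=
    ⟨(c :: s).getLast (by simp), List.getLast?_eq_getLast _⟩
  simp [hy]

private lemma PDAG.shortcut {V : Type} (G : PDAG V) (A Y : Set V) (p : List V)
    (A1 V1 : V) (t0 : List V) (hpe : p = A1 :: V1 :: t0)
    (hshort : G.ShortestViol A Y p)
    (a b c : V) (s1 s2 : List V) (h : p = A1 :: (s1 ++ a :: b :: c :: s2)) :
    ¬ G.adj a c := by
  intro hadj
  obtain ⟨⟨⟨⟨hlen, hnodup, hchain⟩, hpc, hproper, hends⟩, hstart⟩, hmin⟩ := hshort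
  set q : List V := A1 :: (s1 ++ a :: c :: s2) with hq
  have hsub : q.Sublist p := by
    rw [h, hq]
    exact List.Sublist.cons₂ A1 (List.Sublist.append_left
      (List.Sublist.cons₂ a (List.Sublist.cons b (List.Sublist.refl _))) s1)
  have hviolq : G.ViolPath A Y q := by
    refine ⟨⟨⟨?_, hnodup.sublist hsub, ?_⟩, hpc.sublist hsub, ?_, ?_⟩, ?_⟩
    · simp only [hq, List.length_cons, List.length_append]
      omega
    · have hch : List.Chain' G.adj ((A1 :: s1) ++ a :: b :: c :: s2) := by
        rw [h] at hchain; simpa using hchain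
      have := chain'_drop_mid (A1 :: s1) a b c s2 hch hadj
      simpa [hq] using this
    · obtain ⟨a0, t1, heq, ha0, ht1⟩ := hproper
      rw [h] at heq
      injection heq with h1 h2
      refine ⟨A1, s1 ++ a :: c :: s2, rfl, h1 ▸ ha0, ?_⟩
      intro x hx
      apply ht1
      rw [← h2]
      simp only [List.mem_append, List.mem_cons] at hx ⊢
      tauto
    · obtain ⟨y, hy, hyY⟩ := hends
      refine ⟨y, ?_, hyY⟩
      rw [h] at hy
      have h1 : ((A1 :: (s1 ++ [a, b])) ++ c :: s2).getLast? = some y := by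
        simpa using hy
      rw [getLast?_append_cons'] at h1
      have h2 : q.getLast? = ((A1 :: (s1 ++ [a])) ++ c :: s2).getLast? := by
        simp [hq]
      rw [h2, getLast?_append_cons', h1]
    · obtain ⟨a', b', t', heq', hu⟩ := hstart
      have huAV : G.undir A1 V1 := by
        rw [hpe] at heq'
        injection heq' with h1 h2
        injection h2 with h3 _
        rw [h1, h3]
        exact hu
      cases s1 with
      | nil =>
        have haV : V1 = a := by
          have h' := hpe.symm.trans h
          simp only [List.nil_append, List.cons.injEq, true_and] at h'
          exact h'.1
        exact ⟨A1, a, c :: s2, by simp [hq], haV ▸ huAV⟩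
      | cons x s1' =>
        have hxV : V1 = x := by
          have h' := hpe.symm.trans h
          simp only [List.cons_append, List.cons.injEq, true_and] at h'
          exact h'.1
        exact ⟨A1, x, s1' ++ a :: c :: s2, by simp [hq], hxV ▸ huAV⟩
  have hle := hmin q hviolq
  rw [h, hq] at hle
  simp only [List.length_cons, List.length_append] at hle
  omega

/-- If `p = ⟨A1, V1, V2, …, Y1⟩` is a shielded shortest proper possibly causal path
from `A` to `Y` in MPDAG `G` starting with the undirected edge `A1 - V1`, with
`A1 → V2` in `G`, and `G2 = MPDAG(G, {A1 ← V1})`, then `V1 → V2` is in `G2` and the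
subpath of `p` from `V1` onwards is a fully directed causal path in `G2`. -/
theorem stmt9 {V : Type} (G G2 : PDAG V) (hG : G.IsMPDAG) (A Y : Set V)
    (hAY : Disjoint A Y) (p : List V) (A1 V1 V2 : V) (t : List V)
    (hpe : p = A1 :: V1 :: V2 :: t) (hshort : G.ShortestViol A Y p)
    (hA1V2 : G.dir A1 V2) (hG2 : G.IsOrientClosure V1 A1 G2) :
    G2.dir V1 V2 ∧ G2.Causal p.tail := by
  classical
  obtain ⟨hG2m, ⟨hSA, hSU, hlift⟩, hV1A1, hundirIff, _⟩ := hG2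
  obtain ⟨hwf2, hacy2, hR1, hR2, _, _⟩ := hG2m
  obtain ⟨hwfG, hacyG, hmeekG⟩ := hG
  have hA1V2' : G2.dir A1 V2 := hlift A1 V2 hA1V2
  obtain ⟨⟨⟨hlen, hnodup, hchain⟩, hpc, hproper, hends⟩, hstart⟩ := hshort.1
  have hadj12 : G.adj V1 V2 := by
    rw [hpe] at hchain
    exact (List.isChain_cons_cons.mp (List.isChain_cons_cons.mp hchain).2).1
  have hnd21 : ¬ G.dir V2 V1 := by
    rw [hpe] at hpc
    have h1 := (List.pairwise_cons.mp hpc).2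
    exact (List.pairwise_cons.mp h1).1 V2 (by simp)
  have hV1V2 : G2.dir V1 V2 := by
    by_cases h12 : G2.dir V1 V2
    · exact h12
    by_cases h21 : G2.dir V2 V1
    · exact absurd (Relation.TransGen.head h21
        (Relation.TransGen.head hV1A1 (Relation.TransGen.single hA1V2'))) (hacy2 V2)
    rcases hadj12 with hd | hd | hu
    · exact hlift _ _ hd
    · exact absurd hd hnd21
    · have hu2 : G2.undir V1 V2 :=
        (hundirIff V1 V2).mpr ⟨Or.inr (Or.inr hu), h12, h21⟩
      exact hR2 V1 V2 A1 hV1A1 hA1V2' hu2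
  have keystep : ∀ a b c (s1 s2 : List V), p = A1 :: (s1 ++ a :: b :: c :: s2) →
      G2.dir a b → G2.dir b c := by
    intro a b c s1 s2 h hab
    have hshield : ¬ G.adj a c :=
      PDAG.shortcut G A Y p A1 V1 (V2 :: t) hpe
        ⟨⟨⟨⟨hlen, hnodup, hchain⟩, hpc, hproper, hends⟩, hstart⟩, hshort.2⟩ a b c s1 s2 h
    have hnadj2 : ¬ G2.adj a c := fun hx => hshield ((hSA a c).mp hx)
    have hinf : [a, b, c] <:+: p := ⟨A1 :: s1, s2, by rw [h]; simp⟩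
    have hadjbc : G.adj b c :=
      (List.isChain_cons_cons.mp (List.isChain_cons_cons.mp (hchain.infix hinf)).2).1
    have hncb : ¬ G.dir c b := by
      have hsub : [b, c].Sublist p :=
        List.Sublist.trans (List.Sublist.cons a (List.Sublist.refl [b, c])) hinf.sublist
      exact (List.pairwise_cons.mp (hpc.sublist hsub)).1 c (by simp)
    by_cases hbc2 : G2.dir b c
    · exact hbc2
    by_cases hcb2 : G2.dir c b
    · have huc := (hSU a b c).mp ⟨hab, hcb2, hnadj2⟩
      rcases hadjbc with hd | hd | hu
      · exact absurd ⟨hlift b c hd, hcb2⟩ (hwf2.1 b c)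
      · exact absurd hd hncb
      · exact absurd ⟨huc.2.1, G.undir_symm b c hu⟩ (hwfG.2.1 c b)
    rcases hadjbc with hd | hd | hu
    · exact hlift _ _ hd
    · exact absurd hd hncb
    · have hu2 : G2.undir b c :=
        (hundirIff b c).mpr ⟨Or.inr (Or.inr hu), hbc2, hcb2⟩
      exact hR1 a b c hab hu2 hnadj2
  refine ⟨hV1V2, ?_⟩
  have main : ∀ (rest : List V) (s1 : List V) (a b : V),
      p = A1 :: (s1 ++ a :: b :: rest) → G2.dir a b →
      List.Chain' G2.dir (a :: b :: rest) := by
    intro rest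
    induction rest with
    | nil => intro s1 a b h hab; simp [List.Chain', List.isChain_cons_cons, hab]
    | cons c rest ih =>
      intro s1 a b h hab
      have hbc := keystep a b c s1 rest h hab
      have htail := ih (s1 ++ [a]) b c (by rw [h]; simp) hbc
      exact List.isChain_cons_cons.mpr ⟨hab, htail⟩
  rw [hpe]
  exact main t [] V1 V2 (by rw [hpe]; simp) hV1V2
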